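/- Let g be an analytic function on the unit disc 𝔻 that is Lipschitz (|g(z) - g(w)| ≤ L|z-w|). Then there is a constant C (depending only on L and |g|) such that for all z ∈ 𝔻, B(|g|²)(z) ≤ C(|g(z)|² + (1-|z|²)² log(2/(1-|z|))), where B is the Berezin transform B(h)(z) = ∫_𝔻 h(ζ)(1-|z|²)²/|1-\bar{ζ}z|⁴ dA(ζ). -/

import Mathlib

open MeasureTheory Complex Real

/-! ### Auxiliary integrals -/

lemma aux_integrable {a b : ℝ} (ha : 0 < a) (hb : 0 < b) :
    Integrable (fun y : ℝ => (a^2 + (b*y)^2)⁻¹) := by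
  have h : (fun y : ℝ => (a^2 + (b*y)^2)⁻¹)
      = fun y => (a⁻¹ * a⁻¹) * (1 + ((b/a)*y)^2)⁻¹ := by
    funext y
    rw [← mul_inv, ← mul_inv]
    congr 1
    field_simp
  rw [h]
  exact (integrable_inv_one_add_sq.comp_mul_left' (by positivity : (b/a) ≠ 0)).const_mul _

lemma aux_value {a b : ℝ} (ha : 0 < a) (hb : 0 < b) :
    ∫ y : ℝ, (a^2 + (b*y)^2)⁻¹ = π / (a*b) := by
  have h : (fun y : ℝ => (a^2 + (b*y)^2)⁻¹)
      = fun y => (a⁻¹ * a⁻¹) * (1 + ((b/a)*y)^2)⁻¹ := by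
    funext y
    rw [← mul_inv, ← mul_inv]
    congr 1
    field_simp
  rw [h, MeasureTheory.integral_const_mul _ _,
    MeasureTheory.Measure.integral_comp_mul_left (fun t => (1 + t^2)⁻¹) (b/a),
    integral_univ_inv_one_add_sq]
  rw [abs_of_pos (by positivity : (0:ℝ) < (b/a)⁻¹)]
  field_simp
  rw [smul_eq_mul, div_mul_eq_mul_div, mul_div_cancel₀ _ hb.ne']

lemma aux_lintegral {a b : ℝ} (ha : 0 < a) (hb : 0 < b) :
    ∫⁻ y : ℝ, ENNReal.ofReal ((a^2 + (b*y)^2)⁻¹) = ENNReal.ofReal (π / (a*b)) := by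
  rw [← ofReal_integral_eq_lintegral_ofReal (aux_integrable ha hb)
    (Filter.Eventually.of_forall fun y => by positivity), aux_value ha hb]

lemma xint_one {s : ℝ} (h0 : 0 < s) (h1 : s < 1) :
    ∫ x in (-1:ℝ)..1, (1 - s*x)⁻¹ = (Real.log (1+s) - Real.log (1-s))/s := by
  have hpos : ∀ x ∈ Set.uIcc (-1:ℝ) 1, 0 < 1 - s*x := by
    intro x hx
    rw [Set.uIcc_of_le (by norm_num)] at hx
    nlinarith [hx.1, hx.2]
  have hderiv : ∀ x ∈ Set.uIcc (-1:ℝ) 1,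
      HasDerivAt (fun x => -(Real.log (1 - s*x)/s)) ((1 - s*x)⁻¹) x := by
    intro x hx
    have hne : 1 - s*x ≠ 0 := (hpos x hx).ne'
    have hin : HasDerivAt (fun x : ℝ => 1 - s*x) (0 - s) x := by
      simpa using ((hasDerivAt_id x).const_mul s).const_sub (1:ℝ)
    have hlog := (Real.hasDerivAt_log hne).comp x hin
    have := (hlog.div_const s).neg
    refine this.congr_deriv ?_
    rw [zero_sub, mul_neg, neg_div, neg_neg, mul_div_assoc, div_self h0.ne', mul_one]
  have hint : IntervalIntegrable (fun x => (1 - s*x)⁻¹) volume (-1) 1 := by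
    apply ContinuousOn.intervalIntegrable
    exact ContinuousOn.inv₀ (by fun_prop) (fun x hx => (hpos x hx).ne')
  rw [intervalIntegral.integral_eq_sub_of_hasDerivAt hderiv hint]
  have e1 : 1 - s * (-1) = 1 + s := by ring
  rw [e1]
  ring

lemma xint_three {s : ℝ} (h0 : 0 < s) (h1 : s < 1) :
    ∫ x in (-1:ℝ)..1, ((1 - s*x)^3)⁻¹ = (((1-s)^2)⁻¹ - ((1+s)^2)⁻¹)/(2*s) := by
  have hpos : ∀ x ∈ Set.uIcc (-1:ℝ) 1, 0 < 1 - s*x := by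
    intro x hx
    rw [Set.uIcc_of_le (by norm_num)] at hx
    nlinarith [hx.1, hx.2]
  have hderiv : ∀ x ∈ Set.uIcc (-1:ℝ) 1,
      HasDerivAt (fun x => ((1 - s*x)^2)⁻¹/(2*s)) (((1 - s*x)^3)⁻¹) x := by
    intro x hx
    have hne : 1 - s*x ≠ 0 := (hpos x hx).ne'
    have hin : HasDerivAt (fun x : ℝ => 1 - s*x) (0 - s) x := by
      simpa using ((hasDerivAt_id x).const_mul s).const_sub (1:ℝ)
    have hsq : HasDerivAt (fun x : ℝ => (1 - s*x)^2) ((2:ℕ)*(1-s*x)^(2-1)*(0-s)) x :=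
      hin.pow 2
    have hinv := hsq.inv (pow_ne_zero 2 hne)
    have := hinv.div_const (2*s)
    refine this.congr_deriv ?_
    field_simp [h0.ne']
    ring
  have hint : IntervalIntegrable (fun x => ((1 - s*x)^3)⁻¹) volume (-1) 1 := by
    apply ContinuousOn.intervalIntegrable
    exact ContinuousOn.inv₀ (by fun_prop) (fun x hx => pow_ne_zero 3 (hpos x hx).ne')
  rw [intervalIntegral.integral_eq_sub_of_hasDerivAt hderiv hint]
  have e1 : 1 - s * (-1) = 1 + s := by ring
  rw [e1]
  ring

/-! ### Reduction to an iterated integral over a strip -/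

lemma mer_fst (ζ : ℂ) : (Complex.measurableEquivRealProd ζ).1 = ζ.re := rfl
lemma mer_snd (ζ : ℂ) : (Complex.measurableEquivRealProd ζ).2 = ζ.im := rfl

lemma strip_bound (f : ℂ → ℝ) (hf : Measurable f) :
    ∫⁻ ζ in Metric.ball (0:ℂ) 1, ENNReal.ofReal (f ζ)
      ≤ ∫⁻ x in Set.Ioo (-1:ℝ) 1, ∫⁻ y : ℝ, ENNReal.ofReal (f (x + y * I)) := by
  have hsub : Metric.ball (0:ℂ) 1 ⊆
      Complex.measurableEquivRealProd ⁻¹' (Set.Ioo (-1:ℝ) 1 ×ˢ Set.univ) := by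
    intro ζ hζ
    simp only [Metric.mem_ball, dist_zero_right] at hζ
    have h1 : |ζ.re| < 1 := lt_of_le_of_lt (Complex.abs_re_le_norm ζ) hζ
    have h2 := abs_lt.mp h1
    simp only [Set.mem_preimage, Set.mem_prod, Set.mem_Ioo, Set.mem_univ, and_true,
      mer_fst]
    exact h2
  refine le_trans (lintegral_mono_set hsub) ?_
  have key := Complex.volume_preserving_equiv_real_prod.setLIntegral_comp_emb
    Complex.measurableEquivRealProd.measurableEmbedding
    (fun p : ℝ × ℝ => ENNReal.ofReal (f (p.1 + p.2 * I)))
    (Complex.measurableEquivRealProd ⁻¹' (Set.Ioo (-1:ℝ) 1 ×ˢ Set.univ))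
  have heq : ∀ ζ : ℂ,
      ENNReal.ofReal (f ((Complex.measurableEquivRealProd ζ).1 +
        (Complex.measurableEquivRealProd ζ).2 * I)) = ENNReal.ofReal (f ζ) := by
    intro ζ
    rw [mer_fst, mer_snd, Complex.re_add_im]
  simp only [heq] at key
  rw [Set.image_preimage_eq _ Complex.measurableEquivRealProd.surjective] at key
  rw [key]
  rw [Measure.volume_eq_prod, ← Measure.prod_restrict, Measure.restrict_univ]
  have hm : AEMeasurable (fun p : ℝ × ℝ => ENNReal.ofReal (f (p.1 + p.2 * I)))
      ((volume.restrict (Set.Ioo (-1:ℝ) 1)).prod volume) :=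
    (ENNReal.measurable_ofReal.comp (hf.comp (by fun_prop))).aemeasurable
  rw [MeasureTheory.lintegral_prod _ hm]

/-! ### Kernel estimates for real `s` -/

lemma habs_sq (s x y : ℝ) : (‖1 - s*(x+y*I)‖)^2 = (1-s*x)^2 + (s*y)^2 := by
  rw [Complex.sq_norm, Complex.normSq_apply]
  simp only [Complex.sub_re, Complex.sub_im, Complex.one_re, Complex.one_im,
    Complex.mul_re, Complex.mul_im, Complex.ofReal_re, Complex.ofReal_im,
    Complex.add_re, Complex.add_im, Complex.I_re, Complex.I_im]
  ring

lemma kmeas (s : ℝ) (k : ℕ) : Measurable (fun ζ : ℂ => ((‖1 - s*ζ‖)^k)⁻¹) :=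
  (((continuous_norm.comp
    (continuous_const.sub (continuous_const.mul continuous_id))).pow k).measurable).inv

lemma ioo_pos {s x : ℝ} (h0 : 0 < s) (h1 : s < 1) (hx : x ∈ Set.Ioo (-1:ℝ) 1) :
    0 < 1 - s*x := by
  have := hx.1; have := hx.2; nlinarith

lemma intOn {s : ℝ} (h0 : 0 < s) (h1 : s < 1) {k : ℕ} :
    IntegrableOn (fun x : ℝ => π/(s*(1 - s*x)^k)) (Set.Ioo (-1:ℝ) 1) := by
  have hcont : ContinuousOn (fun x : ℝ => π/(s*(1-s*x)^k)) (Set.Icc (-1:ℝ) 1) := by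
    apply ContinuousOn.div continuousOn_const (by fun_prop)
    intro x hx
    have hpos : 0 < 1 - s*x := by nlinarith [hx.1, hx.2]
    positivity
  exact (hcont.integrableOn_compact isCompact_Icc).mono_set Set.Ioo_subset_Icc_self

lemma T2' {s : ℝ} (hhalf : (1:ℝ)/2 ≤ s) (h1 : s < 1) :
    ∫⁻ ζ in Metric.ball (0:ℂ) 1, ENNReal.ofReal (((‖1 - s*ζ‖)^2)⁻¹)
      ≤ ENNReal.ofReal (4*π*Real.log (2/(1-s))) := by
  have h0 : 0 < s := by linarith
  refine le_trans (strip_bound _ (kmeas s 2)) ?_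
  have hinner : ∀ᵐ x ∂volume, x ∈ Set.Ioo (-1:ℝ) 1 →
      (∫⁻ y : ℝ, ENNReal.ofReal (((‖1 - s*(x+y*I)‖)^2)⁻¹))
        = ENNReal.ofReal (π/(s*(1 - s*x)^1)) := by
    refine ae_of_all _ (fun x hx => ?_)
    have hpos := ioo_pos h0 h1 hx
    simp_rw [habs_sq]
    rw [aux_lintegral hpos h0]
    congr 1
    rw [pow_one]
    rw [div_eq_div_iff (by positivity) (by positivity)]
    ring
  rw [setLIntegral_congr_fun_ae measurableSet_Ioo hinner]
  have hnn : 0 ≤ᵐ[volume.restrict (Set.Ioo (-1:ℝ) 1)] fun x => π/(s*(1 - s*x)^1) := by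
    refine (ae_restrict_iff' measurableSet_Ioo).2 (ae_of_all _ (fun x hx => ?_))
    have hpos := ioo_pos h0 h1 hx
    positivity
  rw [← ofReal_integral_eq_lintegral_ofReal (intOn h0 h1) hnn]
  apply ENNReal.ofReal_le_ofReal
  have hrw : ∀ x : ℝ, π/(s*(1 - s*x)^1) = (π/s) * (1 - s*x)⁻¹ := by
    intro x
    rw [pow_one, div_eq_mul_inv, div_eq_mul_inv, mul_inv]
    ring
  simp_rw [hrw]
  rw [MeasureTheory.integral_const_mul]
  have hIoo : ∫ x in Set.Ioo (-1:ℝ) 1, (1 - s*x)⁻¹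
      = (Real.log (1+s) - Real.log (1-s))/s := by
    rw [← MeasureTheory.integral_Ioc_eq_integral_Ioo,
      ← intervalIntegral.integral_of_le (by norm_num : (-1:ℝ) ≤ 1), xint_one h0 h1]
  rw [hIoo]
  have hs1 : 0 < 1 - s := by linarith
  have hlog : Real.log (1+s) - Real.log (1-s) ≤ Real.log (2/(1-s)) := by
    rw [← Real.log_div (by positivity) hs1.ne']
    apply Real.log_le_log (by positivity)
    gcongr
    linarith
  have hlogA : 0 ≤ Real.log (2/(1-s)) := by
    apply Real.log_nonneg
    rw [le_div_iff₀ hs1]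
    linarith
  have hlogB : 0 ≤ Real.log (1+s) - Real.log (1-s) := by
    have := Real.log_le_log hs1 (by linarith : 1 - s ≤ 1 + s)
    linarith
  have hs2 : π/s ≤ 2*π := by
    rw [div_le_iff₀ h0]
    nlinarith [Real.pi_pos]
  have hs3 : (Real.log (1+s) - Real.log (1-s))/s ≤ 2*Real.log (2/(1-s)) := by
    rw [div_le_iff₀ h0]
    nlinarith
  calc π/s * ((Real.log (1+s) - Real.log (1-s))/s)
      ≤ (2*π) * (2*Real.log (2/(1-s))) := by
        apply mul_le_mul hs2 hs3 (div_nonneg hlogB h0.le) (by positivity)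
    _ = 4*π*Real.log (2/(1-s)) := by ring

lemma T1' {s : ℝ} (hhalf : (1:ℝ)/2 ≤ s) (h1 : s < 1) :
    ∫⁻ ζ in Metric.ball (0:ℂ) 1, ENNReal.ofReal (((‖1 - s*ζ‖)^4)⁻¹)
      ≤ ENNReal.ofReal (2*π/(1-s)^2) := by
  have h0 : 0 < s := by linarith
  refine le_trans (strip_bound _ (kmeas s 4)) ?_
  have hinner : ∀ x ∈ Set.Ioo (-1:ℝ) 1,
      (∫⁻ y : ℝ, ENNReal.ofReal (((‖1 - s*(x+y*I)‖)^4)⁻¹))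
        ≤ ENNReal.ofReal (π/(s*(1 - s*x)^3)) := by
    intro x hx
    have hpos := ioo_pos h0 h1 hx
    have hptw : ∀ y : ℝ, ((‖1 - s*(x+y*I)‖)^4)⁻¹
        ≤ ((1-s*x)^2)⁻¹ * ((1-s*x)^2 + (s*y)^2)⁻¹ := by
      intro y
      have h4 : (‖1 - s*(x+y*I)‖)^4
          = ((1-s*x)^2 + (s*y)^2) * ((1-s*x)^2 + (s*y)^2) := by
        rw [show (4:ℕ) = 2*2 from rfl, pow_mul, habs_sq]
        ring
      rw [h4, mul_inv]
      apply mul_le_mul_of_nonneg_right _ (by positivity)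
      apply inv_anti₀ (by positivity)
      nlinarith [sq_nonneg (s*y)]
    calc ∫⁻ y : ℝ, ENNReal.ofReal (((‖1 - s*(x+y*I)‖)^4)⁻¹)
        ≤ ∫⁻ y : ℝ, ENNReal.ofReal (((1-s*x)^2)⁻¹ * ((1-s*x)^2 + (s*y)^2)⁻¹) :=
          lintegral_mono fun y => ENNReal.ofReal_le_ofReal (hptw y)
      _ = ENNReal.ofReal (((1-s*x)^2)⁻¹) *
            ∫⁻ y : ℝ, ENNReal.ofReal (((1-s*x)^2 + (s*y)^2)⁻¹) := by
          simp_rw [ENNReal.ofReal_mul (by positivity : (0:ℝ) ≤ ((1-s*x)^2)⁻¹)]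
          rw [lintegral_const_mul]
          exact ENNReal.measurable_ofReal.comp (by fun_prop)
      _ = ENNReal.ofReal (((1-s*x)^2)⁻¹) * ENNReal.ofReal (π/((1-s*x)*s)) := by
          rw [aux_lintegral hpos h0]
      _ = ENNReal.ofReal (((1-s*x)^2)⁻¹ * (π/((1-s*x)*s))) := by
          rw [← ENNReal.ofReal_mul (by positivity)]
      _ = ENNReal.ofReal (π/(s*(1 - s*x)^3)) := by
          congr 1
          field_simp [hpos.ne', h0.ne']
  refine le_trans (setLIntegral_mono' measurableSet_Ioo hinner) ?_
  have hnn : 0 ≤ᵐ[volume.restrict (Set.Ioo (-1:ℝ) 1)] fun x => π/(s*(1 - s*x)^3) := by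
    refine (ae_restrict_iff' measurableSet_Ioo).2 (ae_of_all _ (fun x hx => ?_))
    have hpos := ioo_pos h0 h1 hx
    positivity
  rw [← ofReal_integral_eq_lintegral_ofReal (intOn h0 h1) hnn]
  apply ENNReal.ofReal_le_ofReal
  have hrw : ∀ x : ℝ, π/(s*(1 - s*x)^3) = (π/s) * ((1 - s*x)^3)⁻¹ := by
    intro x
    rw [div_eq_mul_inv, div_eq_mul_inv, mul_inv]
    ring
  simp_rw [hrw]
  rw [MeasureTheory.integral_const_mul]
  have hIoo : ∫ x in Set.Ioo (-1:ℝ) 1, ((1 - s*x)^3)⁻¹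
      = (((1-s)^2)⁻¹ - ((1+s)^2)⁻¹)/(2*s) := by
    rw [← MeasureTheory.integral_Ioc_eq_integral_Ioo,
      ← intervalIntegral.integral_of_le (by norm_num : (-1:ℝ) ≤ 1), xint_three h0 h1]
  rw [hIoo]
  have hs1 : 0 < 1 - s := by linarith
  have h2 : ((1+s)^2)⁻¹ ≥ 0 := by positivity
  have h3 : ((1-s)^2)⁻¹ > 0 := by positivity
  have hb : (((1-s)^2)⁻¹ - ((1+s)^2)⁻¹) ≤ ((1-s)^2)⁻¹ := by linarith
  calc π/s * ((((1-s)^2)⁻¹ - ((1+s)^2)⁻¹)/(2*s))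
      ≤ π/s * (((1-s)^2)⁻¹/(2*s)) := by
        apply mul_le_mul_of_nonneg_left _ (by positivity)
        gcongr
    _ = π/(2*s^2*(1-s)^2) := by
        field_simp
    _ ≤ 2*π/(1-s)^2 := by
        rw [div_le_div_iff₀ (by positivity) (by positivity)]
        nlinarith [mul_nonneg (mul_nonneg Real.pi_pos.le (sq_nonneg (1-s)))
          (by nlinarith : (0:ℝ) ≤ 4*s^2 - 1)]

/-! ### Rotation invariance -/

lemma rot_eq (z : ℂ) (hz : z ≠ 0) (k : ℕ) :
    ∫⁻ ζ in Metric.ball (0:ℂ) 1,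
        ENNReal.ofReal (((‖1 - (starRingEnd ℂ) ζ * z‖)^k)⁻¹)
      = ∫⁻ ζ in Metric.ball (0:ℂ) 1,
        ENNReal.ofReal (((‖1 - (‖z‖ : ℂ)*ζ‖)^k)⁻¹) := by
  set s : ℝ := ‖z‖ with hs
  have hs0 : 0 < s := by simpa [hs] using (norm_pos_iff.mpr hz)
  set c : ℂ := (starRingEnd ℂ) z / (s : ℂ) with hc
  have hcabs : ‖c‖ = 1 := by
    rw [hc, norm_div, Complex.norm_conj]
    simp [hs0.ne', Complex.norm_real, Real.norm_eq_abs, abs_of_pos hs0]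
    exact div_self hs0.ne'
  have hcmem : c ∈ Metric.sphere (0:ℂ) 1 := by
    simp [hcabs]
  set u : Circle := ⟨c, hcmem⟩ with hu
  have hmp : MeasurePreserving (rotation u) volume volume :=
    (rotation u).measurePreserving
  have hemb : MeasurableEmbedding (rotation u) :=
    (rotation u).toHomeomorph.measurableEmbedding
  have key := hmp.setLIntegral_comp_emb hemb
    (fun ζ : ℂ => ENNReal.ofReal (((‖1 - (s : ℂ)*ζ‖)^k)⁻¹))
    (Metric.ball (0:ℂ) 1)
  have himg : rotation u '' Metric.ball (0:ℂ) 1 = Metric.ball (0:ℂ) 1 := by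
    have := (rotation u).toIsometryEquiv.image_ball (0:ℂ) 1
    simpa using this
  rw [himg] at key
  rw [← key]
  apply setLIntegral_congr_fun measurableSet_ball
  intro ζ _
  have h1 : (s : ℂ) * (rotation u ζ) = (starRingEnd ℂ) z * ζ := by
    rw [rotation_apply]
    show (s:ℂ) * (c * ζ) = _
    rw [hc]
    have hsne : (s : ℂ) ≠ 0 := by exact_mod_cast hs0.ne'
    field_simp
  have h2 : ‖1 - (starRingEnd ℂ) ζ * z‖
      = ‖1 - (starRingEnd ℂ) z * ζ‖ := by
    rw [← Complex.norm_conj (1 - (starRingEnd ℂ) ζ * z)]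
    congr 1
    simp [map_mul, Complex.conj_conj]
    ring
  simp only [h1, h2]

/-! ### The two kernel estimates -/

noncomputable def Vb : ℝ := (volume (Metric.ball (0:ℂ) 1)).toReal

lemma Vb_nonneg : 0 ≤ Vb := ENNReal.toReal_nonneg

lemma ball_vol_eq : (volume (Metric.ball (0:ℂ) 1)) = ENNReal.ofReal Vb :=
  (ENNReal.ofReal_toReal (measure_ball_lt_top).ne).symm

lemma oneSub_le_D {z ζ : ℂ} (hz : ‖z‖ < 1) (hζ : ‖ζ‖ < 1) :
    1 - ‖z‖ ≤ ‖1 - (starRingEnd ℂ) ζ * z‖ := by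
  have h1 : ‖(starRingEnd ℂ) ζ * z‖ ≤ ‖z‖ := by
    rw [norm_mul, Complex.norm_conj]
    nlinarith [norm_nonneg ζ, norm_nonneg z]
  have h2 : (1:ℝ) - ‖(starRingEnd ℂ) ζ * z‖
      ≤ ‖1 - (starRingEnd ℂ) ζ * z‖ := by
    have := norm_sub_norm_le (1:ℂ) ((starRingEnd ℂ) ζ * z)
    simpa using this
  linarith

lemma P1 (z : ℂ) (hz1 : ‖z‖ < 1) :
    ∫⁻ ζ in Metric.ball (0:ℂ) 1,
        ENNReal.ofReal (((‖1 - (starRingEnd ℂ) ζ * z‖)^4)⁻¹)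
      ≤ ENNReal.ofReal ((2*π + 4*Vb)/(1 - ‖z‖)^2) := by
  set s : ℝ := ‖z‖ with hsdef
  have hs0 : 0 ≤ s := norm_nonneg z
  have hs1 : 0 < 1 - s := by linarith
  rcases le_or_gt (1/2 : ℝ) s with hh | hh
  · have hzne : z ≠ 0 := by
      intro h
      rw [h] at hsdef
      simp at hsdef
      rw [hsdef] at hh
      norm_num at hh
    rw [rot_eq z hzne 4]
    refine le_trans (T1' hh hz1) (ENNReal.ofReal_le_ofReal ?_)
    gcongr
    nlinarith [Vb_nonneg]
  · have hptw : ∀ ζ ∈ Metric.ball (0:ℂ) 1,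
        ((‖1 - (starRingEnd ℂ) ζ * z‖)^4)⁻¹ ≤ 4/(1-s)^2 := by
      intro ζ hζ
      have hζ1 : ‖ζ‖ < 1 := by
        simpa [Metric.mem_ball] using hζ
      have hD := oneSub_le_D hz1 hζ1
      have hq : (1-s)^4 ≤ (‖1 - (starRingEnd ℂ) ζ * z‖)^4 := by
        apply pow_le_pow_left₀ hs1.le hD
      have h4 : 0 < (1-s)^4 := by positivity
      calc ((‖1 - (starRingEnd ℂ) ζ * z‖)^4)⁻¹
          ≤ ((1-s)^4)⁻¹ := by
            apply inv_anti₀ h4 hq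
        _ ≤ 4/(1-s)^2 := by
            rw [div_eq_mul_inv, show (1-s)^4 = (1-s)^2*(1-s)^2 by ring, mul_inv]
            apply mul_le_mul_of_nonneg_right _ (by positivity)
            rw [inv_le_iff_one_le_mul₀ (by positivity)]
            nlinarith
    calc ∫⁻ ζ in Metric.ball (0:ℂ) 1,
          ENNReal.ofReal (((‖1 - (starRingEnd ℂ) ζ * z‖)^4)⁻¹)
        ≤ ∫⁻ _ in Metric.ball (0:ℂ) 1, ENNReal.ofReal (4/(1-s)^2) :=
          setLIntegral_mono' measurableSet_ball
            (fun ζ hζ => ENNReal.ofReal_le_ofReal (hptw ζ hζ))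
      _ = ENNReal.ofReal (4/(1-s)^2) * volume (Metric.ball (0:ℂ) 1) :=
          setLIntegral_const _ _
      _ = ENNReal.ofReal (4/(1-s)^2 * Vb) := by
          rw [ball_vol_eq, ← ENNReal.ofReal_mul (by positivity : (0:ℝ) ≤ 4/(1-s)^2)]
      _ ≤ ENNReal.ofReal ((2*π + 4*Vb)/(1 - s)^2) := by
          apply ENNReal.ofReal_le_ofReal
          rw [div_mul_eq_mul_div]
          gcongr
          nlinarith [Real.pi_pos, Vb_nonneg]

lemma P2 (z : ℂ) (hz1 : ‖z‖ < 1) :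
    ∫⁻ ζ in Metric.ball (0:ℂ) 1,
        ENNReal.ofReal (((‖1 - (starRingEnd ℂ) ζ * z‖)^2)⁻¹)
      ≤ ENNReal.ofReal ((4*π + 6*Vb) * Real.log (2/(1 - ‖z‖))) := by
  set s : ℝ := ‖z‖ with hsdef
  have hs0 : 0 ≤ s := norm_nonneg z
  have hs1 : 0 < 1 - s := by linarith
  have hlog2 : Real.log 2 ≤ Real.log (2/(1-s)) := by
    apply Real.log_le_log (by norm_num)
    rw [le_div_iff₀ hs1]
    nlinarith
  have hlogA : 0 ≤ Real.log (2/(1-s)) :=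
    le_trans (Real.log_nonneg (by norm_num)) hlog2
  have hlog23 : (2:ℝ)/3 ≤ Real.log 2 := by
    have := Real.log_two_gt_d9
    linarith
  rcases le_or_gt (1/2 : ℝ) s with hh | hh
  · have hzne : z ≠ 0 := by
      intro h
      rw [h] at hsdef
      simp at hsdef
      rw [hsdef] at hh
      norm_num at hh
    rw [rot_eq z hzne 2]
    refine le_trans (T2' hh hz1) (ENNReal.ofReal_le_ofReal ?_)
    nlinarith [Vb_nonneg]
  · have hptw : ∀ ζ ∈ Metric.ball (0:ℂ) 1,
        ((‖1 - (starRingEnd ℂ) ζ * z‖)^2)⁻¹ ≤ 4 := by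
      intro ζ hζ
      have hζ1 : ‖ζ‖ < 1 := by
        simpa [Metric.mem_ball] using hζ
      have hD := oneSub_le_D hz1 hζ1
      have hq : (1/2:ℝ)^2 ≤ (‖1 - (starRingEnd ℂ) ζ * z‖)^2 := by
        apply pow_le_pow_left₀ (by norm_num)
        linarith
      rw [inv_le_iff_one_le_mul₀ (by nlinarith : (0:ℝ) <
        (‖1 - (starRingEnd ℂ) ζ * z‖)^2)]
      nlinarith
    calc ∫⁻ ζ in Metric.ball (0:ℂ) 1,
          ENNReal.ofReal (((‖1 - (starRingEnd ℂ) ζ * z‖)^2)⁻¹)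
        ≤ ∫⁻ _ in Metric.ball (0:ℂ) 1, ENNReal.ofReal 4 :=
          setLIntegral_mono' measurableSet_ball
            (fun ζ hζ => ENNReal.ofReal_le_ofReal (hptw ζ hζ))
      _ = ENNReal.ofReal 4 * volume (Metric.ball (0:ℂ) 1) := setLIntegral_const _ _
      _ = ENNReal.ofReal (4 * Vb) := by
          rw [ball_vol_eq, ← ENNReal.ofReal_mul (by norm_num : (0:ℝ) ≤ 4)]
      _ ≤ ENNReal.ofReal ((4*π + 6*Vb) * Real.log (2/(1 - s))) := by
          apply ENNReal.ofReal_le_ofReal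
          nlinarith [Real.pi_pos, Vb_nonneg, mul_nonneg Vb_nonneg hlogA,
            mul_le_mul_of_nonneg_left hlog2 (by nlinarith [Vb_nonneg] : (0:ℝ) ≤ 6*Vb)]

/-! ### The key pointwise inequality -/

lemma abs_sub_le_D {z ζ : ℂ} (hz : ‖z‖ < 1) (hζ : ‖ζ‖ < 1) :
    ‖ζ - z‖ ≤ ‖1 - (starRingEnd ℂ) ζ * z‖ := by
  have key : Complex.normSq (1 - (starRingEnd ℂ) ζ * z)
      = Complex.normSq (ζ - z) + (1 - Complex.normSq ζ) * (1 - Complex.normSq z) := by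
    simp only [Complex.normSq_apply, Complex.sub_re, Complex.sub_im, Complex.one_re,
      Complex.one_im, Complex.mul_re, Complex.mul_im, Complex.conj_re, Complex.conj_im]
    ring
  have h1 : Complex.normSq ζ < 1 := by
    rw [← Complex.sq_norm]
    nlinarith [norm_nonneg ζ]
  have h2 : Complex.normSq z < 1 := by
    rw [← Complex.sq_norm]
    nlinarith [norm_nonneg z]
  have h3 : Complex.normSq (ζ - z) ≤ Complex.normSq (1 - (starRingEnd ℂ) ζ * z) := by
    nlinarith
  have := Real.sqrt_le_sqrt h3
  simpa [Complex.norm_def] using this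

/-! ### Main theorem -/

/-- For a Lipschitz analytic function `g` on the unit disc, the Berezin transform of
`|g|²` satisfies `B(|g|²)(z) ≤ C (|g(z)|² + (1-|z|²)² log(2/(1-|z|)))`. -/
theorem berezin_lipschitz_bound (g : ℂ → ℂ) (L : ℝ)
    (hg : DifferentiableOn ℂ g (Metric.ball (0 : ℂ) 1))
    (hLip : ∀ z ∈ Metric.ball (0 : ℂ) 1, ∀ w ∈ Metric.ball (0 : ℂ) 1,
      ‖g z - g w‖ ≤ L * ‖z - w‖) :
    ∃ C : ℝ, ∀ z ∈ Metric.ball (0 : ℂ) 1,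
      (∫ ζ in Metric.ball (0 : ℂ) 1,
          (‖g ζ‖) ^ 2 * ((1 - (‖z‖) ^ 2) ^ 2 /
            (‖1 - (starRingEnd ℂ) ζ * z‖) ^ 4)) ≤
        C * ((‖g z‖) ^ 2 +
          (1 - (‖z‖) ^ 2) ^ 2 * Real.log (2 / (1 - ‖z‖))) := by
  have hL0 : 0 ≤ L := by
    have hmem0 : (0:ℂ) ∈ Metric.ball (0:ℂ) 1 := by simp
    have hmemh : (1/2:ℂ) ∈ Metric.ball (0:ℂ) 1 := by
      simp only [Metric.mem_ball, dist_zero_right]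
      rw [show (1/2:ℂ) = ((1/2:ℝ):ℂ) by norm_num, Complex.norm_real]
      norm_num
    have h := hLip 0 hmem0 (1/2) hmemh
    have ha : ‖(0:ℂ) - 1/2‖ = 1/2 := by
      rw [zero_sub, norm_neg, show (1/2:ℂ) = ((1/2:ℝ):ℂ) by norm_num,
        Complex.norm_real, Real.norm_eq_abs]
      norm_num
    rw [ha] at h
    nlinarith [norm_nonneg (g 0 - g (1/2))]
  set A1 : ℝ := 2*π + 4*Vb with hA1
  set A2 : ℝ := 4*π + 6*Vb with hA2
  have hA1nn : 0 ≤ A1 := by nlinarith [Real.pi_pos, Vb_nonneg]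
  have hA2nn : 0 ≤ A2 := by nlinarith [Real.pi_pos, Vb_nonneg]
  refine ⟨8*A1 + 2*L^2*A2, fun z hz => ?_⟩
  set s : ℝ := ‖z‖ with hsdef
  have hzb : ‖z‖ < 1 := by
    simpa [Metric.mem_ball] using hz
  have hs0 : 0 ≤ s := norm_nonneg z
  have hs1 : 0 < 1 - s := by linarith
  have hlogA : 0 ≤ Real.log (2/(1-s)) := by
    apply Real.log_nonneg
    rw [le_div_iff₀ hs1]
    linarith
  -- pointwise bound
  set D : ℂ → ℝ := fun ζ => ‖1 - (starRingEnd ℂ) ζ * z‖ with hDdef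
  have hDpos : ∀ ζ ∈ Metric.ball (0:ℂ) 1, 0 < D ζ := by
    intro ζ hζ
    have hζ1 : ‖ζ‖ < 1 := by
      simpa [Metric.mem_ball] using hζ
    have := oneSub_le_D hzb hζ1
    linarith
  have hb : ∀ ζ ∈ Metric.ball (0:ℂ) 1,
      (‖g ζ‖)^2 * ((1-s^2)^2 / (D ζ)^4)
        ≤ (2*(‖g z‖)^2*(1-s^2)^2) * ((D ζ)^4)⁻¹
          + (2*L^2*(1-s^2)^2) * ((D ζ)^2)⁻¹ := by
    intro ζ hζ
    have hζ1 : ‖ζ‖ < 1 := by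
      simpa [Metric.mem_ball] using hζ
    have hDp := hDpos ζ hζ
    have hgd : ‖g ζ - g z‖ ≤ L * D ζ := by
      refine le_trans (hLip ζ hζ z hz) ?_
      exact mul_le_mul_of_nonneg_left (abs_sub_le_D hzb hζ1) hL0
    have htri : ‖g ζ‖ ≤ ‖g z‖ + L * D ζ := by
      calc ‖g ζ‖ = ‖g z + (g ζ - g z)‖ := by ring_nf
        _ ≤ ‖g z‖ + ‖g ζ - g z‖ := norm_add_le _ _
        _ ≤ ‖g z‖ + L * D ζ := by linarith
    have hsq : (‖g ζ‖)^2 ≤ 2*(‖g z‖)^2 + 2*L^2*(D ζ)^2 := by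
      have h' : (‖g ζ‖)^2 ≤ (‖g z‖ + L * D ζ)^2 :=
        pow_le_pow_left₀ (norm_nonneg _) htri 2
      nlinarith [sq_nonneg (‖g z‖ - L * D ζ)]
    have hkn : (0:ℝ) ≤ (1-s^2)^2 / (D ζ)^4 := by positivity
    calc (‖g ζ‖)^2 * ((1-s^2)^2 / (D ζ)^4)
        ≤ (2*(‖g z‖)^2 + 2*L^2*(D ζ)^2) * ((1-s^2)^2 / (D ζ)^4) :=
          mul_le_mul_of_nonneg_right hsq hkn
      _ = (2*(‖g z‖)^2*(1-s^2)^2) * ((D ζ)^4)⁻¹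
          + (2*L^2*(1-s^2)^2) * ((D ζ)^2)⁻¹ := by
          field_simp [hDp.ne']
  -- measurability of the integrand
  have hmeasD : ∀ k : ℕ, Measurable (fun ζ : ℂ => ((D ζ)^k)⁻¹) := by
    intro k
    apply Measurable.inv
    apply Measurable.pow_const
    exact continuous_norm.comp
      (continuous_const.sub ((Complex.continuous_conj).mul continuous_const)) |>.measurable
  have hsm : AEStronglyMeasurable
      (fun ζ => (‖g ζ‖)^2 * ((1-s^2)^2 / (D ζ)^4))
      (volume.restrict (Metric.ball (0:ℂ) 1)) := by
    apply ContinuousOn.aestronglyMeasurable _ measurableSet_ball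
    apply ContinuousOn.mul
    · exact ((continuous_norm.comp_continuousOn hg.continuousOn).pow 2)
    · apply ContinuousOn.div continuousOn_const
      · apply Continuous.continuousOn
        exact (continuous_norm.comp
          (continuous_const.sub ((Complex.continuous_conj).mul continuous_const))).pow 4
      · intro ζ hζ
        exact pow_ne_zero 4 (hDpos ζ hζ).ne'
  have hnnae : 0 ≤ᵐ[volume.restrict (Metric.ball (0:ℂ) 1)]
      (fun ζ => (‖g ζ‖)^2 * ((1-s^2)^2 / (D ζ)^4)) := by
    refine ae_of_all _ (fun ζ => ?_)
    positivity
  rw [integral_eq_lintegral_of_nonneg_ae hnnae hsm]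
  -- the main lintegral estimate
  have hlin : ∫⁻ ζ in Metric.ball (0:ℂ) 1,
      ENNReal.ofReal ((‖g ζ‖)^2 * ((1-s^2)^2 / (D ζ)^4))
      ≤ ENNReal.ofReal ((8*A1 + 2*L^2*A2) *
          ((‖g z‖)^2 + (1-s^2)^2 * Real.log (2/(1-s)))) := by
    have step1 : ∫⁻ ζ in Metric.ball (0:ℂ) 1,
        ENNReal.ofReal ((‖g ζ‖)^2 * ((1-s^2)^2 / (D ζ)^4))
        ≤ ∫⁻ ζ in Metric.ball (0:ℂ) 1,
          (ENNReal.ofReal (2*(‖g z‖)^2*(1-s^2)^2) * ENNReal.ofReal (((D ζ)^4)⁻¹)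
            + ENNReal.ofReal (2*L^2*(1-s^2)^2) * ENNReal.ofReal (((D ζ)^2)⁻¹)) := by
      apply setLIntegral_mono' measurableSet_ball
      intro ζ hζ
      rw [← ENNReal.ofReal_mul (by positivity), ← ENNReal.ofReal_mul (by positivity),
        ← ENNReal.ofReal_add (by positivity) (by positivity)]
      exact ENNReal.ofReal_le_ofReal (hb ζ hζ)
    have step2 : ∫⁻ ζ in Metric.ball (0:ℂ) 1,
        (ENNReal.ofReal (2*(‖g z‖)^2*(1-s^2)^2) * ENNReal.ofReal (((D ζ)^4)⁻¹)
          + ENNReal.ofReal (2*L^2*(1-s^2)^2) * ENNReal.ofReal (((D ζ)^2)⁻¹))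
        = ENNReal.ofReal (2*(‖g z‖)^2*(1-s^2)^2) *
            (∫⁻ ζ in Metric.ball (0:ℂ) 1, ENNReal.ofReal (((D ζ)^4)⁻¹))
          + ENNReal.ofReal (2*L^2*(1-s^2)^2) *
            (∫⁻ ζ in Metric.ball (0:ℂ) 1, ENNReal.ofReal (((D ζ)^2)⁻¹)) := by
      rw [lintegral_add_left]
      · rw [lintegral_const_mul, lintegral_const_mul]
        · exact ENNReal.measurable_ofReal.comp (hmeasD 2)
        · exact ENNReal.measurable_ofReal.comp (hmeasD 4)
      · exact (ENNReal.measurable_ofReal.comp (hmeasD 4)).const_mul _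
    refine le_trans step1 (le_trans (le_of_eq step2) ?_)
    have hP1 := P1 z hzb
    have hP2 := P2 z hzb
    calc ENNReal.ofReal (2*(‖g z‖)^2*(1-s^2)^2) *
            (∫⁻ ζ in Metric.ball (0:ℂ) 1, ENNReal.ofReal (((D ζ)^4)⁻¹))
          + ENNReal.ofReal (2*L^2*(1-s^2)^2) *
            (∫⁻ ζ in Metric.ball (0:ℂ) 1, ENNReal.ofReal (((D ζ)^2)⁻¹))
        ≤ ENNReal.ofReal (2*(‖g z‖)^2*(1-s^2)^2) *
            ENNReal.ofReal (A1/(1-s)^2)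
          + ENNReal.ofReal (2*L^2*(1-s^2)^2) *
            ENNReal.ofReal (A2 * Real.log (2/(1-s))) := by
          exact add_le_add (mul_le_mul_right hP1 _) (mul_le_mul_right hP2 _)
      _ = ENNReal.ofReal (2*(‖g z‖)^2*(1-s^2)^2 * (A1/(1-s)^2)
            + 2*L^2*(1-s^2)^2 * (A2 * Real.log (2/(1-s)))) := by
          have hnn1 : (0:ℝ) ≤ 2*(‖g z‖)^2*(1-s^2)^2 * (A1/(1-s)^2) :=
            mul_nonneg (by positivity) (div_nonneg hA1nn (by positivity))
          have hnn2 : (0:ℝ) ≤ 2*L^2*(1-s^2)^2 * (A2 * Real.log (2/(1-s))) :=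
            mul_nonneg (by positivity) (mul_nonneg hA2nn hlogA)
          rw [← ENNReal.ofReal_mul (by positivity), ← ENNReal.ofReal_mul (by positivity),
            ← ENNReal.ofReal_add hnn1 hnn2]
      _ ≤ ENNReal.ofReal ((8*A1 + 2*L^2*A2) *
            ((‖g z‖)^2 + (1-s^2)^2 * Real.log (2/(1-s)))) := by
          apply ENNReal.ofReal_le_ofReal
          have key1 : 2*(‖g z‖)^2*(1-s^2)^2 * (A1/(1-s)^2)
              ≤ 8*A1*(‖g z‖)^2 := by
            have e : (1-s^2)^2 * (A1/(1-s)^2) = A1*(1+s)^2 := by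
              rw [show (1-s^2)^2 = (1-s)^2*(1+s)^2 by ring]
              field_simp
            calc 2*(‖g z‖)^2*(1-s^2)^2 * (A1/(1-s)^2)
                = 2*(‖g z‖)^2*(A1*(1+s)^2) := by
                  rw [mul_assoc (2*(‖g z‖)^2), e]
              _ ≤ 8*A1*(‖g z‖)^2 := by
                  nlinarith [mul_nonneg (mul_nonneg hA1nn (sq_nonneg (‖g z‖)))
                    (mul_nonneg hs1.le (by linarith : (0:ℝ) ≤ 3 + s))]
          have key2 : 2*L^2*(1-s^2)^2 * (A2 * Real.log (2/(1-s)))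
              ≤ 2*L^2*A2 * ((1-s^2)^2 * Real.log (2/(1-s))) := by
            apply le_of_eq
            ring
          have hexp : (8*A1 + 2*L^2*A2) *
              ((‖g z‖)^2 + (1-s^2)^2 * Real.log (2/(1-s)))
              = 8*A1*(‖g z‖)^2 + 2*L^2*A2*(‖g z‖)^2
                + 8*A1*((1-s^2)^2 * Real.log (2/(1-s)))
                + 2*L^2*A2*((1-s^2)^2 * Real.log (2/(1-s))) := by ring
          have hn1 : (0:ℝ) ≤ 2*L^2*A2*(‖g z‖)^2 :=
            mul_nonneg (mul_nonneg (by positivity) hA2nn) (sq_nonneg _)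
          have hn2 : (0:ℝ) ≤ 8*A1*((1-s^2)^2 * Real.log (2/(1-s))) :=
            mul_nonneg (by linarith) (mul_nonneg (sq_nonneg _) hlogA)
          refine le_trans (add_le_add key1 key2) ?_
          rw [hexp]
          clear_value s A1 A2 D
          linarith [hn1, hn2]
  have hfin : ((8*A1 + 2*L^2*A2) *
      ((‖g z‖)^2 + (1-s^2)^2 * Real.log (2/(1-s)))) =
      (8*A1 + 2*L^2*A2) *
        ((‖g z‖)^2 + (1 - (‖z‖)^2)^2 *
          Real.log (2/(1 - ‖z‖))) := by rw [← hsdef]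
  calc (∫⁻ ζ in Metric.ball (0:ℂ) 1,
        ENNReal.ofReal ((‖g ζ‖)^2 * ((1-s^2)^2 / (D ζ)^4))).toReal
      ≤ (ENNReal.ofReal ((8*A1 + 2*L^2*A2) *
          ((‖g z‖)^2 + (1-s^2)^2 * Real.log (2/(1-s))))).toReal :=
        ENNReal.toReal_mono ENNReal.ofReal_ne_top hlin
    _ = (8*A1 + 2*L^2*A2) *
          ((‖g z‖)^2 + (1 - (‖z‖)^2)^2 *
            Real.log (2/(1 - ‖z‖))) := by
        rw [ENNReal.toReal_ofReal ?_, hfin]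
        have h1 : (0:ℝ) ≤ (1-s^2)^2 * Real.log (2/(1-s)) :=
          mul_nonneg (sq_nonneg _) hlogA
        have h2 : (0:ℝ) ≤ 8*A1 + 2*L^2*A2 := by
          nlinarith [hA1nn, hA2nn, sq_nonneg L]
        exact mul_nonneg h2 (add_nonneg (sq_nonneg _) h1)
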